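/- Let t > 0 and q ≥ 1. Then the function h(r) = ( r/(1 + π r t) + 1 )^{1/q} is strictly concave on [0,∞), and consequently, for every ρ > 0, the function g : ℝ² → ℝ defined by g(x) = ( |x|/(1 + π|x| t) + 1 )^{1/q} is not convex on the open ball { x ∈ ℝ² : |x| < ρ }. -/
import Mathlib

lemma key_ineq (c x y a b : ℝ) (hc : 0 < c) (hx : 0 ≤ x) (hy : 0 ≤ y) (hxy : x ≠ y)
    (ha : 0 < a) (hb : 0 < b) (hab : a + b = 1) :
    a * (x / (1 + c * x)) + b * (y / (1 + c * y)) < (a * x + b * y) / (1 + c * (a * x + b * y)) := by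
  have hD1 : 0 < 1 + c * x := by positivity
  have hD2 : 0 < 1 + c * y := by positivity
  have hD : 0 < 1 + c * (a * x + b * y) := by positivity
  rw [mul_div_assoc' a x, mul_div_assoc' b y, div_add_div _ _ hD1.ne' hD2.ne',
    div_lt_div_iff₀ (by positivity) hD]
  have hb' : b = 1 - a := by linarith
  subst hb'
  have hne : x - y ≠ 0 := sub_ne_zero.mpr hxy
  have hpos : 0 < a * (1 - a) * c * (x - y) ^ 2 := by positivity
  nlinarith [hpos]

lemma strict_concave (t q : ℝ) (ht : 0 < t) (hq : 1 ≤ q) :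
    StrictConcaveOn ℝ (Set.Ici (0 : ℝ))
      (fun r : ℝ => (r / (1 + Real.pi * r * t) + 1) ^ (1 / q)) := by
  have hq0 : 0 < q := by linarith
  have hp0 : 0 < 1 / q := by positivity
  have hp1 : 1 / q ≤ 1 := by
    rw [div_le_one hq0]; exact hq
  have hc : 0 < Real.pi * t := by positivity
  refine ⟨convex_Ici _, fun x hx y hy hxy a b ha hb hab => ?_⟩
  simp only [Set.mem_Ici] at hx hy
  have hrw : ∀ r : ℝ, Real.pi * r * t = (Real.pi * t) * r := fun r => by ring
  have hψ : ∀ r : ℝ, 0 ≤ r → 0 ≤ r / (1 + Real.pi * r * t) + 1 := by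
    intro r hr; have : 0 ≤ r / (1 + Real.pi * r * t) := by
      rw [hrw]; positivity
    linarith
  have key := key_ineq (Real.pi * t) x y a b hc hx hy hxy ha hb hab
  simp only [smul_eq_mul]
  -- inner values
  set u := x / (1 + Real.pi * x * t) + 1 with hu
  set v := y / (1 + Real.pi * y * t) + 1 with hv
  have hu0 : 0 ≤ u := hψ x hx
  have hv0 : 0 ≤ v := hψ y hy
  have hcomb0 : 0 ≤ a * u + b * v := by positivity
  have hlt : a * u + b * v < (a * x + b * y) / (1 + Real.pi * (a * x + b * y) * t) + 1 := by
    rw [hu, hv, hrw x, hrw y, hrw (a*x+b*y)]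
    nlinarith [key]
  calc a * u ^ (1 / q) + b * v ^ (1 / q)
      ≤ (a * u + b * v) ^ (1 / q) := by
        have := (Real.concaveOn_rpow (le_of_lt hp0) hp1).2 (Set.mem_Ici.mpr hu0)
          (Set.mem_Ici.mpr hv0) ha.le hb.le hab
        simpa using this
    _ < ((a * x + b * y) / (1 + Real.pi * (a * x + b * y) * t) + 1) ^ (1 / q) :=
        Real.rpow_lt_rpow hcomb0 hlt hp0

/-- The non-convexity claim of Example 5.1: for `t > 0` and `q ≥ 1` the function
`h(r) = (r/(1+πrt) + 1)^{1/q}` is strictly concave on `[0,∞)`, and consequently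
`x ↦ (|x|/(1+π|x|t) + 1)^{1/q}` is not convex on any ball `{|x| < ρ}` in `ℝ²`. -/
theorem stmt_17 (t q : ℝ) (ht : 0 < t) (hq : 1 ≤ q) :
    StrictConcaveOn ℝ (Set.Ici (0 : ℝ))
      (fun r : ℝ => (r / (1 + Real.pi * r * t) + 1) ^ (1 / q)) ∧
    ∀ ρ : ℝ, 0 < ρ →
      ¬ ConvexOn ℝ (Metric.ball (0 : EuclideanSpace ℝ (Fin 2)) ρ)
        (fun x : EuclideanSpace ℝ (Fin 2) =>
          (‖x‖ / (1 + Real.pi * ‖x‖ * t) + 1) ^ (1 / q)) := by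
  have hsc := strict_concave t q ht hq
  refine ⟨hsc, fun ρ hρ hconv => ?_⟩
  set e : EuclideanSpace ℝ (Fin 2) := EuclideanSpace.single (0 : Fin 2) (ρ / 2) with he
  have hne : ‖e‖ = ρ / 2 := by
    rw [he, EuclideanSpace.norm_single, Real.norm_eq_abs, abs_of_pos (by positivity)]
  have h0mem : (0 : EuclideanSpace ℝ (Fin 2)) ∈ Metric.ball (0 : EuclideanSpace ℝ (Fin 2)) ρ := by
    simp [hρ]
  have hemem : e ∈ Metric.ball (0 : EuclideanSpace ℝ (Fin 2)) ρ := by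
    simp [Metric.mem_ball, dist_eq_norm, hne]
    linarith
  have hcv := hconv.2 h0mem hemem (by norm_num : (0:ℝ) ≤ 1/2) (by norm_num : (0:ℝ) ≤ 1/2)
    (by norm_num)
  have hsc2 := hsc.2 (Set.mem_Ici.mpr (le_refl (0:ℝ))) (Set.mem_Ici.mpr (by positivity : (0:ℝ) ≤ ρ/2))
    (by positivity : (0:ℝ) < ρ/2).ne (by norm_num : (0:ℝ) < 1/2) (by norm_num : (0:ℝ) < 1/2)
    (by norm_num)
  have hnorm_half : ‖(1/2 : ℝ) • (0 : EuclideanSpace ℝ (Fin 2)) + (1/2 : ℝ) • e‖ = ρ / 4 := by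
    rw [smul_zero, zero_add, norm_smul, hne]
    simp; linarith
  simp only [smul_eq_mul, mul_zero, zero_add, norm_zero] at hcv hsc2
  rw [hnorm_half, hne] at hcv
  have : (1/2 : ℝ) * (ρ/2) = ρ/4 := by ring
  rw [this] at hsc2
  simp only [zero_div, zero_add] at hcv hsc2
  linarith
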